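/- (Rigidity corollary, case D̃4.) Let d ≥ 1 and let P_1, P_2, P_3, P_4 be complex d×d matrices that are orthogonal projections (P_l = P_l* = P_l²), let α_1, α_2, α_3, α_4 > 0 and λ ∈ ℝ satisfy α_1 P_1 + α_2 P_2 + α_3 P_3 + α_4 P_4 = λ·I_d with λ ≠ (α_1 + α_2 + α_3 + α_4)/2. If the family (P_1, P_2, P_3, P_4) is irreducible (the only subspaces of ℂ^d invariant under all four matrices are {0} and ℂ^d), then the rigidity index equals 2: d²(2 − 4) + Σ_{l=1}^4 dim_ℂ {X ∈ M_d(ℂ) : X P_l = P_l X} = 2. -/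

import Mathlib

set_option maxHeartbeats 1000000

open Matrix LinearMap Module

section Helpers

lemma stdBasis_repr' {d : ℕ} (A : Matrix (Fin d) (Fin d) ℂ) (p : Fin d × Fin d) :
    (Matrix.stdBasis ℂ (Fin d) (Fin d)).repr A p = A p.1 p.2 := by
  simp [Matrix.stdBasis, Basis.repr_reindex]

lemma trace_sandwich {d : ℕ} (A B : Matrix (Fin d) (Fin d) ℂ) :
    LinearMap.trace ℂ _ (LinearMap.mulLeft ℂ A ∘ₗ LinearMap.mulRight ℂ B) = A.trace * B.trace := by
  classical
  rw [LinearMap.trace_eq_matrix_trace ℂ (Matrix.stdBasis ℂ (Fin d) (Fin d))]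
  rw [Matrix.trace]
  have : ∀ p : Fin d × Fin d, (LinearMap.toMatrix (Matrix.stdBasis ℂ (Fin d) (Fin d))
      (Matrix.stdBasis ℂ (Fin d) (Fin d)) (LinearMap.mulLeft ℂ A ∘ₗ LinearMap.mulRight ℂ B)) p p
      = A p.1 p.1 * B p.2 p.2 := by
    intro p
    rw [LinearMap.toMatrix_apply, stdBasis_repr', Matrix.stdBasis_eq_single]
    simp only [LinearMap.comp_apply, LinearMap.mulLeft_apply, LinearMap.mulRight_apply]
    rw [Matrix.mul_apply]
    simp [Matrix.mul_apply, Matrix.single, Finset.sum_ite_eq, ite_and, mul_comm]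
  simp only [Matrix.diag_apply, this]
  rw [Matrix.trace, Matrix.trace, Finset.sum_mul_sum]
  rw [← Finset.sum_product']
  rfl

lemma trace_mulVecLin {d : ℕ} (A : Matrix (Fin d) (Fin d) ℂ) :
    LinearMap.trace ℂ (Fin d → ℂ) A.mulVecLin = A.trace := by
  rw [LinearMap.trace_eq_matrix_trace ℂ (Pi.basisFun ℂ (Fin d)),
    LinearMap.toMatrix_eq_toMatrix', ← Matrix.toLin'_apply' A, LinearMap.toMatrix'_toLin']

lemma trace_proj_nat {d : ℕ} (A : Matrix (Fin d) (Fin d) ℂ) (h : A * A = A) :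
    ∃ n : ℕ, A.trace = (n : ℂ) := by
  refine ⟨Module.finrank ℂ (LinearMap.range A.mulVecLin), ?_⟩
  have hp : LinearMap.IsProj (LinearMap.range A.mulVecLin) A.mulVecLin := by
    constructor
    · intro x; exact LinearMap.mem_range_self _ x
    · rintro x ⟨y, rfl⟩
      have := congrArg Matrix.mulVecLin h
      rw [Matrix.mulVecLin_mul] at this
      exact DFunLike.congr_fun this y
  rw [← trace_mulVecLin A, hp.trace]

lemma centralizer_dim {d : ℕ} (A : Matrix (Fin d) (Fin d) ℂ) (h : A * A = A) :
    ((Module.finrank ℂ (LinearMap.ker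
        (LinearMap.mulRight ℂ A - LinearMap.mulLeft ℂ A)) : ℂ))
      = A.trace ^ 2 + ((1 : Matrix (Fin d) (Fin d) ℂ) - A).trace ^ 2 := by
  classical
  set Q : Matrix (Fin d) (Fin d) ℂ := 1 - A with hQ
  have hAQ : A * Q = 0 := by rw [hQ, mul_sub, mul_one, h, sub_self]
  have hQA : Q * A = 0 := by rw [hQ, sub_mul, one_mul, h, sub_self]
  set π : Module.End ℂ (Matrix (Fin d) (Fin d) ℂ) :=
    (LinearMap.mulLeft ℂ A ∘ₗ LinearMap.mulRight ℂ A)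
      + (LinearMap.mulLeft ℂ Q ∘ₗ LinearMap.mulRight ℂ Q) with hπ
  have hπapp : ∀ X, π X = A * X * A + Q * X * Q := by
    intro X
    simp [hπ, mul_assoc]
  have hproj : LinearMap.IsProj
      (LinearMap.ker (LinearMap.mulRight ℂ A - LinearMap.mulLeft ℂ A)) π := by
    constructor
    · intro X
      rw [LinearMap.mem_ker, LinearMap.sub_apply, LinearMap.mulRight_apply,
        LinearMap.mulLeft_apply, hπapp, sub_eq_zero]
      calc (A * X * A + Q * X * Q) * A = A * X * (A * A) + Q * X * (Q * A) := by
            simp [add_mul, mul_assoc]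
        _ = A * (A * X * A + Q * X * Q) := by
            rw [h, hQA, mul_zero, add_zero, mul_add]
            rw [show A * (A * X * A) = A * X * A by rw [← mul_assoc, ← mul_assoc, h]]
            rw [show A * (Q * X * Q) = 0 by
              rw [show A * (Q * X * Q) = (A*Q) * X * Q by noncomm_ring, hAQ, zero_mul, zero_mul]]
            rw [add_zero]
    · intro X hX
      rw [LinearMap.mem_ker, LinearMap.sub_apply, LinearMap.mulRight_apply,
        LinearMap.mulLeft_apply, sub_eq_zero] at hX
      rw [hπapp]
      have h1 : A * X * A = X * A := by rw [← hX, mul_assoc, h]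
      have h2 : Q * X * Q = X - X * A := by
        have : Q * X * Q = X * Q - A * X * Q := by rw [hQ]; noncomm_ring
        rw [this, hQ, mul_sub, mul_sub, mul_one, mul_one, ← hX, mul_assoc, h, hX]
        abel
      rw [h1, h2]; abel
  rw [← hproj.trace, hπ, map_add, trace_sandwich, trace_sandwich]
  ring

lemma trace_mul_basis {d : ℕ} (Y : Matrix (Fin d) (Fin d) ℂ) (i j : Fin d) :
    (Y * Matrix.single j i 1).trace = Y i j := by
  classical
  simp [Matrix.trace, Matrix.diag, Matrix.mul_apply, Matrix.single, ite_and,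
    Finset.sum_ite_eq]

lemma trace_faithful {d : ℕ} (Y : Matrix (Fin d) (Fin d) ℂ)
    (h : ∀ X, (Y * X).trace = 0) : Y = 0 := by
  ext i j
  simpa [trace_mul_basis] using h (Matrix.single j i 1)

lemma schur {d : ℕ} (P : Fin 4 → Matrix (Fin d) (Fin d) ℂ) (hd : 1 ≤ d)
    (hirr : ∀ W : Submodule ℂ (Fin d → ℂ),
      (∀ l, ∀ x ∈ W, (P l).mulVec x ∈ W) → W = ⊥ ∨ W = ⊤)
    (X : Matrix (Fin d) (Fin d) ℂ) (hX : ∀ l, X * P l = P l * X) :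
    ∃ c : ℂ, X = c • 1 := by
  haveI : NeZero d := ⟨by omega⟩
  haveI : Nontrivial (Fin d → ℂ) := by
    refine ⟨0, fun _ => 1, ?_⟩
    intro hcon
    exact one_ne_zero (congrFun hcon.symm 0)
  obtain ⟨μ, hμ⟩ := Module.End.exists_eigenvalue (X.mulVecLin : Module.End ℂ (Fin d → ℂ))
  set W := Module.End.eigenspace (X.mulVecLin : Module.End ℂ (Fin d → ℂ)) μ with hW
  have hWne : W ≠ ⊥ := hμ
  have hinv : ∀ l, ∀ x ∈ W, (P l).mulVec x ∈ W := by
    intro l x hx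
    rw [hW, Module.End.mem_eigenspace_iff] at hx ⊢
    have : X.mulVecLin ((P l).mulVec x) = (X * P l).mulVec x := by
      simp [Matrix.mulVecLin, Matrix.mulVec_mulVec]
    rw [this, hX l, ← Matrix.mulVec_mulVec]
    rw [show X.mulVecLin x = X.mulVec x from rfl] at hx
    rw [hx, Matrix.mulVec_smul]
  rcases hirr W hinv with hbot | htop
  · exact absurd hbot hWne
  · refine ⟨μ, ?_⟩
    have : ∀ v : Fin d → ℂ, X.mulVec v = μ • v := by
      intro v
      have hv : v ∈ W := htop ▸ Submodule.mem_top
      rw [hW, Module.End.mem_eigenspace_iff] at hv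
      exact hv
    ext i j
    have := congrFun (this (Pi.single j 1)) i
    rw [Matrix.mulVec_single_one] at this
    simpa [Matrix.one_apply, Pi.single_apply, eq_comm] using this

/-- The trace pairing as a linear map into the dual. -/
noncomputable def tform (d : ℕ) : Matrix (Fin d) (Fin d) ℂ →ₗ[ℂ]
    Module.Dual ℂ (Matrix (Fin d) (Fin d) ℂ) where
  toFun Y := (Matrix.traceLinearMap (Fin d) ℂ ℂ) ∘ₗ (LinearMap.mulLeft ℂ Y)
  map_add' Y Z := by
    ext X
    simp [add_mul]
  map_smul' c Y := by
    ext X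
    simp [Matrix.smul_mul]

lemma tform_apply {d : ℕ} (Y X : Matrix (Fin d) (Fin d) ℂ) :
    tform d Y X = (Y * X).trace := rfl

lemma tform_injective (d : ℕ) : Function.Injective (tform d) := by
  rw [injective_iff_map_eq_zero]
  intro Y hY
  exact trace_faithful Y fun X => by
    simpa [tform_apply] using congrFun (congrArg DFunLike.coe hY) X

lemma tform_surjective (d : ℕ) : Function.Surjective (tform d) :=
  (LinearMap.injective_iff_surjective_of_finrank_eq_finrank
    (Subspace.dual_finrank_eq (K := ℂ) (V := Matrix (Fin d) (Fin d) ℂ)).symm).mp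
    (tform_injective d)


lemma endgame_sq (d n0 n1 n2 n3 : ℤ)
    (hle : (2*n0-d)^2 + (2*n1-d)^2 + (2*n2-d)^2 + (2*n3-d)^2 ≤ 4)
    (hnz : ¬ (2*n0 = d ∧ 2*n1 = d ∧ 2*n2 = d ∧ 2*n3 = d)) :
    (2*n0-d)^2 + (2*n1-d)^2 + (2*n2-d)^2 + (2*n3-d)^2 = 4 := by
  have hchar : ∀ m : ℤ, m^2 ≤ 4 →
      (m = 0 ∧ m^2 = 0) ∨ (m = 1 ∧ m^2 = 1) ∨ (m = -1 ∧ m^2 = 1)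
      ∨ (m = 2 ∧ m^2 = 4) ∨ (m = -2 ∧ m^2 = 4) := by
    intro m hm
    have hlo : -2 ≤ m := by nlinarith
    have hhi : m ≤ 2 := by nlinarith
    have : m = -2 ∨ m = -1 ∨ m = 0 ∨ m = 1 ∨ m = 2 := by omega
    rcases this with h | h | h | h | h <;> rw [h] <;> norm_num
  have c0 := hchar (2*n0-d) (by nlinarith [sq_nonneg (2*n1-d), sq_nonneg (2*n2-d), sq_nonneg (2*n3-d)])
  have c1 := hchar (2*n1-d) (by nlinarith [sq_nonneg (2*n0-d), sq_nonneg (2*n2-d), sq_nonneg (2*n3-d)])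
  have c2 := hchar (2*n2-d) (by nlinarith [sq_nonneg (2*n0-d), sq_nonneg (2*n1-d), sq_nonneg (2*n3-d)])
  have c3 := hchar (2*n3-d) (by nlinarith [sq_nonneg (2*n0-d), sq_nonneg (2*n1-d), sq_nonneg (2*n2-d)])
  obtain ⟨s0, hs0⟩ : ∃ s, (2*n0-d)^2 = s := ⟨_, rfl⟩
  obtain ⟨s1, hs1⟩ : ∃ s, (2*n1-d)^2 = s := ⟨_, rfl⟩
  obtain ⟨s2, hs2⟩ : ∃ s, (2*n2-d)^2 = s := ⟨_, rfl⟩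
  obtain ⟨s3, hs3⟩ : ∃ s, (2*n3-d)^2 = s := ⟨_, rfl⟩
  rw [hs0] at c0
  rw [hs1] at c1
  rw [hs2] at c2
  rw [hs3] at c3
  rw [hs0, hs1, hs2, hs3] at hle ⊢
  omega

lemma endgame (d n0 n1 n2 n3 : ℤ)
    (hle : (n0^2 + (d - n0)^2) + (n1^2 + (d - n1)^2) + (n2^2 + (d - n2)^2)
      + (n3^2 + (d - n3)^2) ≤ 2 * d^2 + 2)
    (hnz : ¬ (2*n0 = d ∧ 2*n1 = d ∧ 2*n2 = d ∧ 2*n3 = d)) :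
    (n0^2 + (d - n0)^2) + (n1^2 + (d - n1)^2) + (n2^2 + (d - n2)^2)
      + (n3^2 + (d - n3)^2) = 2 * d^2 + 2 := by
  have hm4 : (2*n0-d)^2 + (2*n1-d)^2 + (2*n2-d)^2 + (2*n3-d)^2 = 4 :=
    endgame_sq d n0 n1 n2 n3 (by nlinarith [hle]) hnz
  have h2 : 2 * ((n0^2 + (d - n0)^2) + (n1^2 + (d - n1)^2) + (n2^2 + (d - n2)^2)
      + (n3^2 + (d - n3)^2)) = 2 * (2 * d^2 + 2) := by linear_combination hm4
  linarith [h2]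

end Helpers

theorem stmt_19 (d : ℕ) (hd : 1 ≤ d) (P : Fin 4 → Matrix (Fin d) (Fin d) ℂ)
    (hsa : ∀ l, (P l).conjTranspose = P l) (hproj : ∀ l, P l * P l = P l)
    (α : Fin 4 → ℝ) (hα : ∀ l, 0 < α l) (lam : ℝ)
    (hsum : (α 0 : ℂ) • P 0 + (α 1 : ℂ) • P 1 + (α 2 : ℂ) • P 2 + (α 3 : ℂ) • P 3 =
      (lam : ℂ) • (1 : Matrix (Fin d) (Fin d) ℂ))
    (hlam : lam ≠ (α 0 + α 1 + α 2 + α 3) / 2)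
    (hirr : ∀ W : Submodule ℂ (Fin d → ℂ),
      (∀ l, ∀ x ∈ W, (P l).mulVec x ∈ W) → W = ⊥ ∨ W = ⊤) :
    (d : ℤ) ^ 2 * (2 - 4) +
      ∑ l : Fin 4,
        (Module.finrank ℂ (Subalgebra.centralizer ℂ {P l} :
          Subalgebra ℂ (Matrix (Fin d) (Fin d) ℂ)) : ℤ) = 2 := by
  classical
  -- rewrite hsum as an indexed sum
  have hsum4 : ∑ l : Fin 4, (α l : ℂ) • P l = (lam : ℂ) • 1 := by
    rw [Fin.sum_univ_four]; exact hsum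
  have hone : (1 : Matrix (Fin d) (Fin d) ℂ) ≠ 0 := by
    intro hcon
    have := congrFun (congrFun hcon ⟨0, hd⟩) ⟨0, hd⟩
    simp [Matrix.one_apply] at this
  -- ranks of the projections
  choose n hn using fun l => trace_proj_nat (P l) (hproj l)
  -- the commutator maps
  set ad : Fin 4 → (Matrix (Fin d) (Fin d) ℂ →ₗ[ℂ] Matrix (Fin d) (Fin d) ℂ) :=
    fun l => LinearMap.mulRight ℂ (P l) - LinearMap.mulLeft ℂ (P l) with had
  have hmemker : ∀ l X, X ∈ LinearMap.ker (ad l) ↔ X * P l = P l * X := by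
    intro l X
    rw [had, LinearMap.mem_ker, LinearMap.sub_apply, LinearMap.mulRight_apply,
      LinearMap.mulLeft_apply, sub_eq_zero]
  -- identify the centralizer with the kernel of `ad l`
  have hcent : ∀ l, Module.finrank ℂ (Subalgebra.centralizer ℂ {P l} :
      Subalgebra ℂ (Matrix (Fin d) (Fin d) ℂ)) = Module.finrank ℂ (LinearMap.ker (ad l)) := by
    intro l
    have hEq : Subalgebra.toSubmodule (Subalgebra.centralizer ℂ
        {P l} : Subalgebra ℂ (Matrix (Fin d) (Fin d) ℂ)) = LinearMap.ker (ad l) := by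
      ext X
      rw [Subalgebra.mem_toSubmodule, Subalgebra.mem_centralizer_iff, hmemker]
      constructor
      · intro h; exact (h (P l) rfl).symm
      · intro h g hg; rw [Set.mem_singleton_iff] at hg; rw [hg]; exact h.symm
    rw [← hEq, Subalgebra.finrank_toSubmodule]
  -- dimension of the centralizers
  have hcval : ∀ l, (Module.finrank ℂ (LinearMap.ker (ad l)) : ℂ)
      = (n l : ℂ) ^ 2 + ((d : ℂ) - (n l : ℂ)) ^ 2 := by
    intro l
    rw [had, centralizer_dim (P l) (hproj l), hn l]
    congr 1
    rw [Matrix.trace_sub, Matrix.trace_one, hn l]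
    norm_num
  -- integer version
  have hcvalZ : ∀ l, (Module.finrank ℂ (LinearMap.ker (ad l)) : ℤ)
      = (n l : ℤ) ^ 2 + ((d : ℤ) - (n l : ℤ)) ^ 2 := by
    intro l
    have := hcval l
    exact_mod_cast this
  -- trace of the sum equation
  have htrace : (α 0 : ℝ) * n 0 + α 1 * n 1 + α 2 * n 2 + α 3 * n 3 = lam * d := by
    have := congrArg Matrix.trace hsum
    simp only [Matrix.trace_add, Matrix.trace_smul, Matrix.trace_one, Complex.real_smul, smul_eq_mul,
      Fintype.card_fin] at this
    rw [hn 0, hn 1, hn 2, hn 3] at this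
    have : ((α 0 * n 0 + α 1 * n 1 + α 2 * n 2 + α 3 * n 3 : ℝ) : ℂ)
        = ((lam * d : ℝ) : ℂ) := by push_cast; push_cast at this; linear_combination this
    exact_mod_cast this
  -- UPPER BOUND : ∑ finrank ker (ad l) ≤ 2 d² + 2
  -- Schur's lemma: the joint commutant is ℂ·1
  have hSchur : ∀ X : Matrix (Fin d) (Fin d) ℂ,
      (∀ l, X * P l = P l * X) → ∃ c : ℂ, X = c • 1 := schur P hd hirr
  -- the deformation complex maps
  set Wr : Fin 4 → Submodule ℂ (Matrix (Fin d) (Fin d) ℂ) :=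
    fun l => LinearMap.range (ad l) with hWr
  set Phi : Matrix (Fin d) (Fin d) ℂ →ₗ[ℂ] (∀ l : Fin 4, ↥(Wr l)) :=
    LinearMap.pi (fun l => (ad l).rangeRestrict) with hPhi
  set Psi : (∀ l : Fin 4, ↥(Wr l)) →ₗ[ℂ] Matrix (Fin d) (Fin d) ℂ :=
    ∑ l : Fin 4, (α l : ℂ) • ((Wr l).subtype ∘ₗ LinearMap.proj l) with hPsi
  have hPsiapp : ∀ b, Psi b = ∑ l : Fin 4, (α l : ℂ) • (b l : Matrix (Fin d) (Fin d) ℂ) := by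
    intro b
    rw [hPsi]
    simp [LinearMap.sum_apply]
  have hadapp : ∀ l X, ad l X = X * P l - P l * X := by
    intro l X
    rw [had]
    simp
  -- dimension of the matrix space
  have hM : Module.finrank ℂ (Matrix (Fin d) (Fin d) ℂ) = d ^ 2 := by
    rw [Module.finrank_matrix]
    simp [Fintype.card_fin]
    ring
  -- kernel of Phi is the span of 1
  have hkerPhi : LinearMap.ker Phi = Submodule.span ℂ {(1 : Matrix (Fin d) (Fin d) ℂ)} := by
    apply le_antisymm
    · intro X hX
      rw [hPhi, LinearMap.ker_pi, Submodule.mem_iInf] at hX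
      have hc : ∀ l, X * P l = P l * X := by
        intro l
        have := hX l
        rw [LinearMap.ker_rangeRestrict] at this
        exact (hmemker l X).mp this
      obtain ⟨c, rfl⟩ := hSchur X hc
      exact Submodule.smul_mem _ c (Submodule.mem_span_singleton_self 1)
    · rw [Submodule.span_le, Set.singleton_subset_iff]
      rw [SetLike.mem_coe, hPhi, LinearMap.ker_pi, Submodule.mem_iInf]
      intro l
      rw [LinearMap.ker_rangeRestrict]
      rw [hmemker l]
      rw [one_mul, mul_one]
  have hkerPhirank : Module.finrank ℂ (LinearMap.ker Phi) = 1 := by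
    rw [hkerPhi]
    exact finrank_span_singleton hone
  have hPhirank : Module.finrank ℂ (LinearMap.range Phi) + 1 = d ^ 2 := by
    rw [← hkerPhirank, LinearMap.finrank_range_add_finrank_ker, hM]
  -- range Phi is contained in ker Psi
  have hPhiPsi : LinearMap.range Phi ≤ LinearMap.ker Psi := by
    rintro _ ⟨X, rfl⟩
    rw [LinearMap.mem_ker, hPsiapp]
    have hcomp : ∀ l, ((Phi X) l : Matrix (Fin d) (Fin d) ℂ) = X * P l - P l * X := by
      intro l
      rw [hPhi]
      show ((ad l).rangeRestrict X : Matrix (Fin d) (Fin d) ℂ) = _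
      rw [show ((ad l).rangeRestrict X : Matrix (Fin d) (Fin d) ℂ) = ad l X from rfl]
      exact hadapp l X
    calc ∑ l : Fin 4, (α l : ℂ) • ((Phi X) l : Matrix (Fin d) (Fin d) ℂ)
        = ∑ l : Fin 4, (X * ((α l : ℂ) • P l) - ((α l : ℂ) • P l) * X) := by
          refine Finset.sum_congr rfl fun l _ => ?_
          rw [hcomp l, smul_sub, mul_smul_comm, smul_mul_assoc]
      _ = X * (∑ l : Fin 4, (α l : ℂ) • P l) - (∑ l : Fin 4, (α l : ℂ) • P l) * X := by
          rw [Finset.sum_sub_distrib, Finset.mul_sum, Finset.sum_mul]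
      _ = 0 := by
          rw [hsum4, mul_smul_comm, smul_mul_assoc, mul_one, one_mul, sub_self]
  -- the dual annihilator of range Psi is at most one dimensional
  have hann : (LinearMap.range Psi).dualAnnihilator ≤
      Submodule.span ℂ {tform d (1 : Matrix (Fin d) (Fin d) ℂ)} := by
    intro phi hphi
    obtain ⟨Y, rfl⟩ := tform_surjective d phi
    have hY : ∀ l, Y * P l = P l * Y := by
      intro l
      have hZ : ∀ X, ((P l * Y - Y * P l) * X).trace = 0 := by
        intro X
        have hmem : (α l : ℂ) • (ad l X) ∈ LinearMap.range Psi := by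
          refine ⟨Pi.single l ⟨ad l X, LinearMap.mem_range_self _ X⟩, ?_⟩
          rw [hPsiapp]
          rw [Finset.sum_eq_single l]
          · rw [Pi.single_eq_same]
          · intro k _ hk
            rw [Pi.single_eq_of_ne hk]
            simp
          · intro hcon
            exact absurd (Finset.mem_univ l) hcon
        have h0 := (Submodule.mem_dualAnnihilator _).mp hphi _ hmem
        rw [tform_apply, Matrix.mul_smul, Matrix.trace_smul] at h0
        have halne : (α l : ℂ) ≠ 0 := by
          exact_mod_cast (hα l).ne'
        have h1 : (Y * (X * P l - P l * X)).trace = 0 := by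
          rcases smul_eq_zero.mp h0 with h | h
          · exact absurd h halne
          · rw [← hadapp l]
            exact h
        have h2 : (Y * (X * P l)).trace = (Y * (P l * X)).trace := by
          rw [mul_sub, Matrix.trace_sub, sub_eq_zero] at h1
          exact h1
        rw [sub_mul, Matrix.trace_sub, sub_eq_zero]
        calc (P l * Y * X).trace = (Y * (X * P l)).trace := by
              rw [← Matrix.trace_mul_cycle]
              rw [mul_assoc]
          _ = (Y * (P l * X)).trace := h2
          _ = (Y * P l * X).trace := by rw [mul_assoc]
      have := trace_faithful _ hZ
      rw [sub_eq_zero] at this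
      exact this.symm
    obtain ⟨c, rfl⟩ := hSchur Y hY
    rw [_root_.map_smul]
    exact Submodule.smul_mem _ _ (Submodule.mem_span_singleton_self _)
  have htform1 : tform d (1 : Matrix (Fin d) (Fin d) ℂ) ≠ 0 := by
    intro hcon
    exact hone (tform_injective d (by rw [hcon, map_zero]))
  have hannrank : Module.finrank ℂ (LinearMap.range Psi).dualAnnihilator ≤ 1 := by
    refine le_trans (Submodule.finrank_mono hann) ?_
    rw [finrank_span_singleton htform1]
  have hPsirank : Module.finrank ℂ (LinearMap.range Psi)
      + Module.finrank ℂ (LinearMap.range Psi).dualAnnihilator = d ^ 2 := by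
    have hq := LinearEquiv.finrank_eq (Subspace.quotEquivAnnihilator (LinearMap.range Psi))
    rw [← hq, add_comm, Submodule.finrank_quotient_add_finrank, hM]
  -- rank-nullity bookkeeping
  have hpi : Module.finrank ℂ (∀ l : Fin 4, ↥(Wr l)) = ∑ l : Fin 4, Module.finrank ℂ (Wr l) :=
    Module.finrank_pi_fintype ℂ
  have hRN : Module.finrank ℂ (LinearMap.range Psi) + Module.finrank ℂ (LinearMap.ker Psi)
      = ∑ l : Fin 4, Module.finrank ℂ (Wr l) := by
    rw [← hpi]
    exact LinearMap.finrank_range_add_finrank_ker Psi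
  have hkerPsi : Module.finrank ℂ (LinearMap.range Phi)
      ≤ Module.finrank ℂ (LinearMap.ker Psi) := Submodule.finrank_mono hPhiPsi
  have hrksum : ∀ l : Fin 4, Module.finrank ℂ (Wr l)
      + Module.finrank ℂ (LinearMap.ker (ad l)) = d ^ 2 := by
    intro l
    rw [hWr, ← hM]
    exact LinearMap.finrank_range_add_finrank_ker (ad l)
  -- upper bound
  have hupper : ∑ l : Fin 4, Module.finrank ℂ (LinearMap.ker (ad l)) ≤ 2 * d ^ 2 + 2 := by
    have h1 : ∑ l : Fin 4, (Module.finrank ℂ (Wr l)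
        + Module.finrank ℂ (LinearMap.ker (ad l))) = 4 * d ^ 2 := by
      rw [Finset.sum_congr rfl fun l _ => hrksum l]
      simp [Finset.sum_const]
    rw [Finset.sum_add_distrib] at h1
    obtain ⟨D, hD⟩ : ∃ D, d ^ 2 = D := ⟨_, rfl⟩
    rw [hD] at h1 hPhirank hPsirank
    omega
  -- pass to integers: the quantity 2*(goal sum)
  have hsummand : ∀ l : Fin 4, ((Module.finrank ℂ (Subalgebra.centralizer ℂ {P l} :
      Subalgebra ℂ (Matrix (Fin d) (Fin d) ℂ))) : ℤ)
      = (n l : ℤ) ^ 2 + ((d : ℤ) - (n l : ℤ)) ^ 2 := by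
    intro l
    rw [hcent l]
    exact hcvalZ l
  have hupperZ : ∑ l : Fin 4, ((n l : ℤ) ^ 2 + ((d : ℤ) - (n l : ℤ)) ^ 2) ≤ 2 * (d:ℤ) ^ 2 + 2 := by
    have : ∑ l : Fin 4, ((n l : ℤ) ^ 2 + ((d : ℤ) - (n l : ℤ)) ^ 2)
        = ∑ l : Fin 4, ((Module.finrank ℂ (LinearMap.ker (ad l))) : ℤ) := by
      refine Finset.sum_congr rfl fun l _ => ?_
      rw [hcvalZ l]
    rw [this, ← Nat.cast_sum]
    exact_mod_cast hupper
  -- the integers 2 n l - d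
  have hmain : ((n 0 : ℤ)^2 + ((d:ℤ) - (n 0:ℤ))^2) + ((n 1 : ℤ)^2 + ((d:ℤ) - (n 1:ℤ))^2)
      + ((n 2 : ℤ)^2 + ((d:ℤ) - (n 2:ℤ))^2) + ((n 3 : ℤ)^2 + ((d:ℤ) - (n 3:ℤ))^2)
      = 2 * (d:ℤ)^2 + 2 := by
    rw [Fin.sum_univ_four] at hupperZ
    by_cases hall : (2 * (n 0 : ℤ) = d ∧ 2 * (n 1 : ℤ) = d ∧ 2 * (n 2 : ℤ) = d
        ∧ 2 * (n 3 : ℤ) = d)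
    · exfalso
      apply hlam
      obtain ⟨e0, e1, e2, e3⟩ := hall
      have hdpos : (0:ℝ) < d := by exact_mod_cast hd
      have f0 : 2 * (n 0 : ℝ) = (d : ℝ) := by exact_mod_cast e0
      have f1 : 2 * (n 1 : ℝ) = (d : ℝ) := by exact_mod_cast e1
      have f2 : 2 * (n 2 : ℝ) = (d : ℝ) := by exact_mod_cast e2
      have f3 : 2 * (n 3 : ℝ) = (d : ℝ) := by exact_mod_cast e3
      have hkey : lam * d = ((α 0 + α 1 + α 2 + α 3) / 2) * d := by
        rw [← htrace]
        linear_combination (α 0 / 2) * f0 + (α 1 / 2) * f1 + (α 2 / 2) * f2 + (α 3 / 2) * f3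
      exact mul_right_cancel₀ (ne_of_gt hdpos) hkey
    · exact endgame d (n 0) (n 1) (n 2) (n 3) hupperZ hall
  -- final arithmetic
  calc (d : ℤ) ^ 2 * (2 - 4) + ∑ l : Fin 4,
        (Module.finrank ℂ (Subalgebra.centralizer ℂ {P l} :
          Subalgebra ℂ (Matrix (Fin d) (Fin d) ℂ)) : ℤ)
      = (d : ℤ) ^ 2 * (2 - 4)
        + ∑ l : Fin 4, ((n l : ℤ) ^ 2 + ((d : ℤ) - (n l : ℤ)) ^ 2) := by
        rw [Finset.sum_congr rfl fun l _ => hsummand l]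
    _ = 2 := by
        rw [Fin.sum_univ_four]
        rw [show ((n 0 : ℤ)^2 + ((d:ℤ) - (n 0:ℤ))^2) + ((n 1 : ℤ)^2 + ((d:ℤ) - (n 1:ℤ))^2)
          + ((n 2 : ℤ)^2 + ((d:ℤ) - (n 2:ℤ))^2) + ((n 3 : ℤ)^2 + ((d:ℤ) - (n 3:ℤ))^2)
          = 2 * (d:ℤ)^2 + 2 from hmain]
        ring
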